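/- Let y₁,…,y_k ∈ ℝ^n. The map d_{x₀}h : x ↦ 2(⟨x₀ − y₁, x⟩,…,⟨x₀ − y_k, x⟩) is transversal to the diagonal D_k of ℝ^k (i.e., its image together with D_k spans ℝ^k) if and only if the points y₁,…,y_k are affinely independent. -/

import Mathlib

/-- The map `x ↦ 2(⟨x₀ - y₁, x⟩, …, ⟨x₀ - y_k, x⟩)` is transversal to the diagonal of
`ℝ^k` (its range together with the diagonal spans `ℝ^k`) iff `y₁, …, y_k` are affinely
independent. -/
theorem transversal_to_diagonal_iff_affineIndependent (n k : ℕ) [NeZero k]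
    (x₀ : EuclideanSpace ℝ (Fin n)) (y : Fin k → EuclideanSpace ℝ (Fin n))
    (L : EuclideanSpace ℝ (Fin n) →ₗ[ℝ] EuclideanSpace ℝ (Fin k))
    (hL : ∀ x i, L x i = 2 * (inner ℝ (x₀ - y i) x : ℝ)) :
    (LinearMap.range L ⊔
        Submodule.span ℝ {(WithLp.toLp 2 (fun _ => 1 : Fin k → ℝ) : EuclideanSpace ℝ (Fin k))} = ⊤) ↔
      AffineIndependent ℝ y := by
  -- key: inner product of `L x` with `c`
  have key : ∀ (c : EuclideanSpace ℝ (Fin k)) (x : EuclideanSpace ℝ (Fin n)),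
      (inner ℝ (L x) c : ℝ) = inner ℝ ((2:ℝ) • ∑ i, c i • (x₀ - y i)) x := by
    intro c x
    rw [PiLp.inner_apply, real_inner_smul_left, sum_inner]
    simp only [hL, real_inner_smul_left, RCLike.inner_apply, starRingEnd_apply, star_trivial]
    rw [Finset.mul_sum]
    congr 1
    ext i
    ring
  -- characterization of membership in the orthogonal complement of the sup
  have mem_iff : ∀ c : EuclideanSpace ℝ (Fin k),
      (c ∈ (LinearMap.range L ⊔
        Submodule.span ℝ {(WithLp.toLp 2 (fun _ => 1 : Fin k → ℝ) : EuclideanSpace ℝ (Fin k))})ᗮ ↔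
      (∑ i, c i = 0 ∧ ∑ i, c i • y i = 0)) := by
    intro c
    rw [← Submodule.inf_orthogonal, Submodule.mem_inf,
      Submodule.mem_orthogonal_singleton_iff_inner_right]
    constructor
    · rintro ⟨h1, h2⟩
      have hsum : ∑ i, c i = 0 := by
        simpa [PiLp.inner_apply] using h2
      have hv : (2 : ℝ) • ∑ i, c i • (x₀ - y i) = 0 := by
        rw [← inner_self_eq_zero (𝕜 := ℝ)]
        rw [real_inner_self_eq_norm_sq]
        have h0 : (inner ℝ ((2 : ℝ) • ∑ i, c i • (x₀ - y i))
            ((2 : ℝ) • ∑ i, c i • (x₀ - y i)) : ℝ) = 0 := by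
          rw [← key]
          exact h1 _ ⟨_, rfl⟩
        rw [real_inner_self_eq_norm_sq] at h0
        exact h0
      have hv' : ∑ i, c i • (x₀ - y i) = 0 := by
        have := smul_eq_zero.1 hv
        simpa using this
      refine ⟨hsum, ?_⟩
      have : ∑ i, c i • (x₀ - y i) = (∑ i, c i) • x₀ - ∑ i, c i • y i := by
        rw [Finset.sum_smul]
        rw [← Finset.sum_sub_distrib]
        congr 1; ext i; rw [smul_sub]
      rw [this, hsum, zero_smul, zero_sub, neg_eq_zero] at hv'
      exact hv'
    · rintro ⟨hsum, hy⟩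
      constructor
      · rintro v ⟨x, rfl⟩
        rw [key]
        have : ∑ i, c i • (x₀ - y i) = 0 := by
          have : ∑ i, c i • (x₀ - y i) = (∑ i, c i) • x₀ - ∑ i, c i • y i := by
            rw [Finset.sum_smul, ← Finset.sum_sub_distrib]
            congr 1; ext i; rw [smul_sub]
          rw [this, hsum, zero_smul, zero_sub, hy, neg_zero]
        rw [this, smul_zero, inner_zero_left]
      · simpa [PiLp.inner_apply] using hsum
  constructor
  · intro h
    rw [affineIndependent_iff_of_fintype]
    intro w hw hws
    have hws' : ∑ i, w i • y i = 0 := by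
      rwa [Finset.univ.weightedVSub_eq_linear_combination hw] at hws
    have : (WithLp.toLp 2 w : EuclideanSpace ℝ (Fin k)) ∈ (LinearMap.range L ⊔
        Submodule.span ℝ {(WithLp.toLp 2 (fun _ => 1 : Fin k → ℝ) : EuclideanSpace ℝ (Fin k))})ᗮ :=
      (mem_iff (WithLp.toLp 2 w)).2 ⟨hw, hws'⟩
    rw [h, Submodule.top_orthogonal_eq_bot, Submodule.mem_bot] at this
    intro i
    exact congrArg (fun v => v i) this
  · intro h
    rw [← Submodule.orthogonal_eq_bot_iff]
    rw [Submodule.eq_bot_iff]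
    intro c hc
    obtain ⟨hsum, hy⟩ := (mem_iff c).1 hc
    rw [affineIndependent_iff_of_fintype] at h
    have := h c hsum (by
      rwa [Finset.univ.weightedVSub_eq_linear_combination hsum])
    ext i
    simpa using this i
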